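/- Consider the reduction dataset built from a 2-CNF formula F over n variables with m clauses, where m < n², and let 0 ≤ r ≤ m. The following are equivalent: (i) there exists an assignment τ such that at least r clauses of F each have exactly one true literal under τ; (ii) there exist w ∈ ℝ^n with all coordinates nonzero and a bonus vector on the dataset with at most m − r nonzero values such that the adjusted scores are non-increasing along the ranking π of the reduction. -/

import Mathlib

/-- The position (0-indexed) of the clause point `p_i` in the ranking `π` of the
reduction: the dataset consists of `(m+1)·n²` zero points and `m` clause points,
listed as `n²` zeros, `p_1`, `n²` zeros, `p_2`, …, `p_m`, `n²` zeros. -/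
def clauseIdx (n m : ℕ) (i : Fin m) : Fin ((m + 1) * n ^ 2 + m) :=
  ⟨((i : ℕ) + 1) * n ^ 2 + (i : ℕ), by
    have h1 : ((i : ℕ) + 1) * n ^ 2 ≤ (m + 1) * n ^ 2 :=
      Nat.mul_le_mul_right _ (Nat.succ_le_succ i.isLt.le)
    exact add_lt_add_of_le_of_lt h1 i.isLt⟩

/-- The literal with sign `s ∈ {1, −1}` on a variable with truth value `b` is true:
a positive literal (`s = 1`) is true when `b = true`, a negated literal (`s = −1`)
is true when `b = false`. -/
def litTrue (s : ℝ) (b : Bool) : Prop :=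
  (s = 1 ∧ b = true) ∨ (s = -1 ∧ b = false)

lemma sum_two (n : ℕ) (w : Fin n → ℝ) (a b : Fin n) (s t : ℝ) :
    ∑ j, w j * ((if j = a then s else 0) + (if j = b then t else 0)) = w a * s + w b * t := by
  simp [mul_add, Finset.sum_add_distrib, mul_ite, Finset.sum_ite_eq']

lemma exists_V_zero {N : ℕ} (V : Fin N → ℝ) (k s : ℕ)
    (hcard : (Finset.univ.filter fun idx => V idx ≠ 0).card < k) (hs : s + k ≤ N) :
    ∃ q : Fin N, s ≤ q.val ∧ q.val < s + k ∧ V q = 0 := by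
  by_contra hcon
  push_neg at hcon
  have hsub : (Finset.univ.image (fun t : Fin k => (⟨s + t, by omega⟩ : Fin N))) ⊆
      Finset.univ.filter fun idx => V idx ≠ 0 := by
    intro q hq
    simp only [Finset.mem_image, Finset.mem_univ, true_and] at hq
    obtain ⟨t, ht⟩ := hq
    simp only [Finset.mem_filter, Finset.mem_univ, true_and]
    subst ht
    exact hcon _ (by simp only [Fin.val_mk]; omega) (by simp only [Fin.val_mk]; omega)
  have hinj : Function.Injective (fun t : Fin k => (⟨s + t, by omega⟩ : Fin N)) := by
    intro a b hab
    have := congrArg Fin.val hab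
    simp at this
    exact Fin.ext this
  have := Finset.card_le_card hsub
  rw [Finset.card_image_of_injective _ hinj, Finset.card_univ, Fintype.card_fin] at this
  omega

lemma litTrue_iff (s w : ℝ) (hs : s = 1 ∨ s = -1) (hw : w ≠ 0) :
    litTrue s (decide (0 < w)) ↔ 0 < w * s := by
  rcases hs with h | h <;> subst h <;> by_cases h01 : 0 < w <;> norm_num [litTrue, h01]
  all_goals rcases hw.lt_or_gt with h2 | h2 <;> first | linarith | assumption

lemma contrib_cases (s : ℝ) (hs : s = 1 ∨ s = -1) (b : Bool) :
    (litTrue s b ∧ (if b then (1:ℝ) else -1) * s = 1) ∨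
    (¬ litTrue s b ∧ (if b then (1:ℝ) else -1) * s = -1) := by
  rcases hs with h | h <;> subst h <;> cases b <;> norm_num [litTrue]

lemma clauseIdx_inj (n m : ℕ) (hm : m < n ^ 2) : Function.Injective (clauseIdx n m) := by
  intro i j h
  have hv : ((i:ℕ)+1)*n^2 + (i:ℕ) = ((j:ℕ)+1)*n^2 + (j:ℕ) := congrArg Fin.val h
  have hv' : (i:ℕ) + ((i:ℕ)+1)*n^2 = (j:ℕ) + ((j:ℕ)+1)*n^2 := by
    rw [add_comm ((i:ℕ)) _, add_comm ((j:ℕ)) _]; exact hv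
  have hmod := congrArg (· % n^2) hv'
  simp only [Nat.add_mul_mod_self_right] at hmod
  rw [Nat.mod_eq_of_lt (lt_trans i.isLt hm), Nat.mod_eq_of_lt (lt_trans j.isLt hm)] at hmod
  exact Fin.ext hmod

/-- correctness of the reduction: for the reduction dataset of a 2-CNF
formula with `m < n²` clauses and `0 ≤ r ≤ m`, the following are equivalent:
(i) some assignment `τ` makes exactly one literal true in each of at least `r` clauses;
(ii) there exist `w ∈ ℝ^n` with all coordinates nonzero and a bonus vector on the
dataset with at most `m − r` nonzero values such that the adjusted scores are
non-increasing along the ranking `π` of the reduction. -/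
theorem stmt_5 (n m r : ℕ) (hm : m < n ^ 2) (hr : r ≤ m)
    (va vb : Fin m → Fin n) (sa sb : Fin m → ℝ)
    (hvab : ∀ i, va i ≠ vb i)
    (hsa : ∀ i, sa i = 1 ∨ sa i = -1) (hsb : ∀ i, sb i = 1 ∨ sb i = -1)
    (p : Fin m → Fin n → ℝ)
    (hp : ∀ i j, p i j =
      (if j = va i then sa i else 0) + (if j = vb i then sb i else 0))
    (D : Fin ((m + 1) * n ^ 2 + m) → Fin n → ℝ)
    (hD1 : ∀ i, D (clauseIdx n m i) = p i)
    (hD2 : ∀ idx, (∀ i, idx ≠ clauseIdx n m i) → D idx = 0) :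
    (∃ τ : Fin n → Bool, ∃ R : Finset (Fin m), r ≤ R.card ∧
        ∀ i ∈ R, Xor' (litTrue (sa i) (τ (va i))) (litTrue (sb i) (τ (vb i)))) ↔
      (∃ w : Fin n → ℝ, (∀ j, w j ≠ 0) ∧
        ∃ V : Fin ((m + 1) * n ^ 2 + m) → ℝ,
          (Finset.univ.filter fun idx => V idx ≠ 0).card ≤ m - r ∧
          ∀ idx idx' : Fin ((m + 1) * n ^ 2 + m), idx ≤ idx' →
            (∑ j, w j * D idx' j) + V idx' ≤ (∑ j, w j * D idx j) + V idx) := by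
  constructor
  · rintro ⟨τ, R, hRcard, hR⟩
    have hRsum : ∀ i ∈ R,
        ∑ j, (if τ j then (1:ℝ) else -1) * D (clauseIdx n m i) j = 0 := by
      intro i hi
      rw [hD1]
      have hsum : ∑ j, (if τ j then (1:ℝ) else -1) * p i j =
          (if τ (va i) then (1:ℝ) else -1) * sa i +
          (if τ (vb i) then (1:ℝ) else -1) * sb i := by
        simp only [hp]
        exact sum_two n (fun j => if τ j then (1:ℝ) else -1) (va i) (vb i) (sa i) (sb i)
      rw [hsum]
      have hA := contrib_cases (sa i) (hsa i) (τ (va i))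
      have hB := contrib_cases (sb i) (hsb i) (τ (vb i))
      rcases hR i hi with ⟨hT1, hT2⟩ | ⟨hT1, hT2⟩
      · rcases hA with ⟨hA1, hA2⟩ | ⟨hA1, hA2⟩
        · rcases hB with ⟨hB1, hB2⟩ | ⟨hB1, hB2⟩
          · exact absurd hB1 hT2
          · rw [hA2, hB2]; ring
        · exact absurd hT1 hA1
      · rcases hB with ⟨hB1, hB2⟩ | ⟨hB1, hB2⟩
        · rcases hA with ⟨hA1, hA2⟩ | ⟨hA1, hA2⟩
          · exact absurd hA1 hT2
          · rw [hA2, hB2]; ring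
        · exact absurd hT1 hB1
    refine ⟨fun j => if τ j then (1:ℝ) else -1,
      fun j => by by_cases h : τ j <;> simp [h], ?_⟩
    refine ⟨fun idx => -∑ j, (if τ j then (1:ℝ) else -1) * D idx j, ?_, ?_⟩
    · have hsub : (Finset.univ.filter fun idx =>
          (fun idx => -∑ j, (if τ j then (1:ℝ) else -1) * D idx j) idx ≠ 0) ⊆
          (Finset.univ \ R).image (clauseIdx n m) := by
        intro idx hidx
        simp only [Finset.mem_filter, Finset.mem_univ, true_and, ne_eq, neg_eq_zero] at hidx
        have hex : ∃ i, idx = clauseIdx n m i := by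
          by_contra hc
          push_neg at hc
          exact hidx (by rw [hD2 idx hc]; simp)
        obtain ⟨i, rfl⟩ := hex
        simp only [Finset.mem_image, Finset.mem_sdiff, Finset.mem_univ, true_and]
        refine ⟨i, ?_, rfl⟩
        intro hiR
        exact hidx (hRsum i hiR)
      calc (Finset.univ.filter fun idx =>
            (fun idx => -∑ j, (if τ j then (1:ℝ) else -1) * D idx j) idx ≠ 0).card
          ≤ ((Finset.univ \ R).image (clauseIdx n m)).card := Finset.card_le_card hsub
        _ ≤ (Finset.univ \ R).card := Finset.card_image_le
        _ = m - R.card := by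
            rw [Finset.card_sdiff_of_subset (Finset.subset_univ R), Finset.card_univ, Fintype.card_fin]
        _ ≤ m - r := Nat.sub_le_sub_left hRcard m
    · intro idx idx' _
      simp
  · rintro ⟨w, hw0, V, hVcard, hmono⟩
    refine ⟨fun j => decide (0 < w j),
      Finset.univ.filter (fun i => V (clauseIdx n m i) = 0), ?_, ?_⟩
    · have h1 : (Finset.univ.filter fun i : Fin m => ¬ V (clauseIdx n m i) = 0).card ≤
          (Finset.univ.filter fun idx => V idx ≠ 0).card := by
        apply Finset.card_le_card_of_injOn (clauseIdx n m)
        · intro i hi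
          simp only [Finset.mem_coe, Finset.mem_filter, Finset.mem_univ, true_and] at hi ⊢
          exact hi
        · exact fun a _ b _ hab => clauseIdx_inj n m hm hab
      have h2 := Finset.card_filter_add_card_filter_not
        (s := (Finset.univ : Finset (Fin m))) (p := fun i => V (clauseIdx n m i) = 0)
      rw [Finset.card_univ, Fintype.card_fin] at h2
      omega
    · intro i hi
      have hVi : V (clauseIdx n m i) = 0 := (Finset.mem_filter.mp hi).2
      have hcard' : (Finset.univ.filter fun idx => V idx ≠ 0).card < n ^ 2 :=
        lt_of_le_of_lt hVcard (lt_of_le_of_lt (Nat.sub_le m r) hm)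
      have hiv : (i : ℕ) < m := i.isLt
      have hring1 : ((i:ℕ)+1)*n^2 = (i:ℕ)*n^2 + n^2 := by ring
      have hring2 : ((i:ℕ)+2)*n^2 = (i:ℕ)*n^2 + n^2 + n^2 := by ring
      have hb1 : ((i:ℕ)+1)*n^2 ≤ (m+1)*n^2 := Nat.mul_le_mul_right _ (by omega)
      have hb2 : ((i:ℕ)+2)*n^2 ≤ (m+1)*n^2 := Nat.mul_le_mul_right _ (by omega)
      have hcv : (clauseIdx n m i).val = ((i:ℕ)+1)*n^2 + (i:ℕ) := rfl
      -- a zero point with zero bonus before the clause point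
      obtain ⟨zb, hzb1, hzb2, hzb3⟩ := exists_V_zero V (n^2) ((i:ℕ)*n^2 + (i:ℕ)) hcard'
        (by linarith)
      have hleb : zb ≤ clauseIdx n m i := by
        rw [Fin.le_def, hcv]; linarith
      have hDzb : D zb = 0 := by
        apply hD2
        intro i' heq
        have hveq : zb.val = ((i':ℕ)+1)*n^2 + (i':ℕ) := by rw [heq]; rfl
        rcases lt_or_ge (i' : ℕ) (i : ℕ) with hlt | hge
        · have := Nat.mul_le_mul_right (n^2) (show (i':ℕ)+1 ≤ (i:ℕ) by omega)
          have : False := by linarith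
          exact this
        · have := Nat.mul_le_mul_right (n^2) (show (i:ℕ)+1 ≤ (i':ℕ)+1 by omega)
          have : False := by linarith
          exact this
      -- a zero point with zero bonus after the clause point
      obtain ⟨za, hza1, hza2, hza3⟩ := exists_V_zero V (n^2) (((i:ℕ)+1)*n^2 + (i:ℕ) + 1)
        hcard' (by linarith)
      have hlea : clauseIdx n m i ≤ za := by
        rw [Fin.le_def, hcv]; linarith
      have hDza : D za = 0 := by
        apply hD2
        intro i' heq
        have hveq : za.val = ((i':ℕ)+1)*n^2 + (i':ℕ) := by rw [heq]; rfl
        rcases le_or_gt (i' : ℕ) (i : ℕ) with hle | hgt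
        · have := Nat.mul_le_mul_right (n^2) (show (i':ℕ)+1 ≤ (i:ℕ)+1 by omega)
          have : False := by linarith
          exact this
        · have := Nat.mul_le_mul_right (n^2) (show (i:ℕ)+2 ≤ (i':ℕ)+1 by omega)
          have : False := by linarith
          exact this
      have hscore_b : (∑ j, w j * p i j) + V (clauseIdx n m i) ≤ 0 := by
        have h1 := hmono zb (clauseIdx n m i) hleb
        rw [hDzb, hzb3, hD1] at h1
        simpa using h1
      have hscore_a : 0 ≤ (∑ j, w j * p i j) + V (clauseIdx n m i) := by
        have h1 := hmono (clauseIdx n m i) za hlea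
        rw [hDza, hza3, hD1] at h1
        simpa using h1
      have hsum : ∑ j, w j * p i j = w (va i) * sa i + w (vb i) * sb i := by
        simp only [hp]
        exact sum_two n w (va i) (vb i) (sa i) (sb i)
      rw [hsum, hVi] at hscore_b hscore_a
      have hsum0 : w (va i) * sa i + w (vb i) * sb i = 0 := by linarith
      have hA0 : w (va i) * sa i ≠ 0 :=
        mul_ne_zero (hw0 _) (by rcases hsa i with h | h <;> rw [h] <;> norm_num)
      show Xor' (litTrue (sa i) (decide (0 < w (va i)))) (litTrue (sb i) (decide (0 < w (vb i))))
      rw [litTrue_iff _ _ (hsa i) (hw0 (va i)), litTrue_iff _ _ (hsb i) (hw0 (vb i))]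
      rcases hA0.lt_or_gt with h2 | h2
      · exact Or.inr ⟨by linarith, by linarith⟩
      · exact Or.inl ⟨h2, by linarith⟩
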